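/- Composition Jacobian formula: let (a_i,b_i), 1 ≤ i ≤ n, be pairs with a_i ≥ 1 and 0 ≤ b_i ≤ a_i, and let h = h_{a_1,b_1} ∘ ⋯ ∘ h_{a_n,b_n} where h_{a,b}(x,y) = (1/(a+x),(b+y)/(a+x)). Then for all (x,y) ∈ [0,1]², |Jac h (x,y)| = 1/(q_n + x·q_{n−1})³, where q_k is defined by q_{−1}=0, q_0=1, q_{k+1}=a_{k+1}q_k + q_{k−1}. -/

import Mathlib

open scoped BigOperators

/-- Inverse branch `h_{a,b}(x,y) = (1/(a+x), (b+y)/(a+x))` of the Ostrowski map. -/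
noncomputable def hinv (a b : ℤ) (p : ℝ × ℝ) : ℝ × ℝ :=
  (1 / ((a : ℝ) + p.1), ((b : ℝ) + p.2) / ((a : ℝ) + p.1))

/-- `hcomp a b n = h_{a 1, b 1} ∘ ⋯ ∘ h_{a n, b n}`. -/
noncomputable def hcomp (a b : ℕ → ℤ) : ℕ → (ℝ × ℝ → ℝ × ℝ)
  | 0 => id
  | n + 1 => hcomp a b n ∘ hinv (a (n + 1)) (b (n + 1))

/-- `qrec a n = q_{n-1}`, with `q_{-1} = 0`, `q_0 = 1`, `q_{k+1} = a_{k+1} q_k + q_{k-1}`. -/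
def qrec (a : ℕ → ℤ) : ℕ → ℤ
  | 0 => 0
  | 1 => 1
  | n + 2 => a (n + 1) * qrec a (n + 1) + qrec a n

/-- `prec a n = p_{n-1}`, with `p_{-1} = 1`, `p_0 = 0`, `p_{k+1} = a_{k+1} p_k + p_{k-1}`. -/
def prec (a : ℕ → ℤ) : ℕ → ℤ
  | 0 => 1
  | 1 => 0
  | n + 2 => a (n + 1) * prec a (n + 1) + prec a n

open ContinuousLinearMap in
/-- The derivative of `hinv a b` at `(x, y)`. -/
noncomputable def hD (a b : ℤ) (x y : ℝ) : ℝ × ℝ →L[ℝ] ℝ × ℝ :=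
  ((-(((a:ℝ)+x)^2)⁻¹) • (fst ℝ ℝ ℝ)).prod
    ((((b:ℝ)+y) • ((-(((a:ℝ)+x)^2)⁻¹) • (fst ℝ ℝ ℝ))) + (((a:ℝ)+x)⁻¹) • (snd ℝ ℝ ℝ))

theorem hinv_deriv (a b : ℤ) (x y : ℝ) (h : (a:ℝ) + x ≠ 0) :
    HasFDerivAt (hinv a b) (hD a b x y) (x, y) := by
  have h1 : HasFDerivAt (fun p : ℝ × ℝ => (a:ℝ) + p.1) (ContinuousLinearMap.fst ℝ ℝ ℝ) (x, y) :=
    (hasFDerivAt_fst).const_add _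
  have hinv0 : HasDerivAt (fun t : ℝ => t⁻¹) (-(((a:ℝ)+x)^2)⁻¹) ((a:ℝ)+x) := by
    simpa [pow_two] using hasDerivAt_inv h
  have h2 : HasFDerivAt (fun p : ℝ × ℝ => ((a:ℝ) + p.1)⁻¹)
      ((-(((a:ℝ)+x)^2)⁻¹) • (ContinuousLinearMap.fst ℝ ℝ ℝ)) (x, y) :=
    hinv0.comp_hasFDerivAt (x, y) h1
  have h3 : HasFDerivAt (fun p : ℝ × ℝ => (b:ℝ) + p.2) (ContinuousLinearMap.snd ℝ ℝ ℝ) (x, y) :=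
    (hasFDerivAt_snd).const_add _
  have h4 := h3.mul h2
  have he : hinv a b = fun p : ℝ × ℝ =>
      (((a:ℝ)+p.1)⁻¹, ((b:ℝ)+p.2)*((a:ℝ)+p.1)⁻¹) := by
    funext p; simp [hinv, div_eq_mul_inv]
  rw [he]
  exact h2.prodMk h4

theorem hD_det (a b : ℤ) (x y : ℝ) : (hD a b x y).det = -(((a:ℝ)+x)^3)⁻¹ := by
  have : (hD a b x y).det = LinearMap.det ((hD a b x y) : ℝ × ℝ →ₗ[ℝ] ℝ × ℝ) := rfl
  rw [this, ← LinearMap.det_toMatrix (Module.Basis.finTwoProd ℝ), Matrix.det_fin_two]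
  simp [LinearMap.toMatrix_apply, hD]
  rw [← mul_inv]
  ring_nf

theorem qrec_pos (n : ℕ) (a : ℕ → ℤ) (ha : ∀ i, 1 ≤ i → i ≤ n → 1 ≤ a i) :
    1 ≤ qrec a (n + 1) ∧ 0 ≤ qrec a n := by
  induction n with
  | zero => simp [qrec]
  | succ n ih =>
    obtain ⟨h1, h0⟩ := ih (fun i hi hin => ha i hi (hin.trans (Nat.le_succ n)))
    refine ⟨?_, le_trans zero_le_one h1⟩
    have hA : 1 ≤ a (n + 1) := ha (n + 1) (Nat.le_add_left 1 n) le_rfl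
    show 1 ≤ a (n + 1) * qrec a (n + 1) + qrec a n
    nlinarith

theorem hcomp_key (n : ℕ) (a b : ℕ → ℤ)
    (ha : ∀ i, 1 ≤ i → i ≤ n → 1 ≤ a i) :
    ∀ x y : ℝ, x ∈ Set.Icc (0 : ℝ) 1 →
    ∃ D : ℝ × ℝ →L[ℝ] ℝ × ℝ, HasFDerivAt (hcomp a b n) D (x, y) ∧
      |D.det| = 1 / ((qrec a (n + 1) : ℝ) + x * (qrec a n : ℝ)) ^ 3 := by
  induction n with
  | zero =>
    intro x y _
    refine ⟨ContinuousLinearMap.id ℝ (ℝ × ℝ), hasFDerivAt_id _, ?_⟩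
    have : (ContinuousLinearMap.id ℝ (ℝ × ℝ)).det = 1 := LinearMap.det_id
    simp [this, qrec]
  | succ n ih =>
    intro x y hx
    have hA : 1 ≤ a (n + 1) := ha (n + 1) (Nat.le_add_left 1 n) le_rfl
    have hAR : (1 : ℝ) ≤ (a (n + 1) : ℝ) := by exact_mod_cast hA
    have hd : (0 : ℝ) < (a (n + 1) : ℝ) + x := by
      have := hx.1; linarith
    have hd1 : (1 : ℝ) ≤ (a (n + 1) : ℝ) + x := by
      have := hx.1; linarith
    have hx' : (((a (n + 1) : ℝ) + x)⁻¹) ∈ Set.Icc (0 : ℝ) 1 :=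
      ⟨le_of_lt (inv_pos.mpr hd), inv_le_one_of_one_le₀ hd1⟩
    set x' : ℝ := ((a (n + 1) : ℝ) + x)⁻¹ with hx'def
    set y' : ℝ := ((b (n + 1) : ℝ) + y) / ((a (n + 1) : ℝ) + x) with hy'def
    obtain ⟨D', hD', hdet'⟩ :=
      ih (fun i hi hin => ha i hi (hin.trans (Nat.le_succ n))) x' y' hx'
    have hpt : hinv (a (n + 1)) (b (n + 1)) (x, y) = (x', y') := by
      simp [hinv, hx'def, hy'def, one_div]
    have hDat : HasFDerivAt (hcomp a b n) D' (hinv (a (n + 1)) (b (n + 1)) (x, y)) := by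
      rw [hpt]; exact hD'
    have hcompD : HasFDerivAt (hcomp a b (n + 1))
        (D'.comp (hD (a (n + 1)) (b (n + 1)) x y)) (x, y) :=
      hDat.comp (x, y) (hinv_deriv _ _ x y (ne_of_gt hd))
    refine ⟨_, hcompD, ?_⟩
    have hdetcomp : (D'.comp (hD (a (n + 1)) (b (n + 1)) x y)).det
        = D'.det * (hD (a (n + 1)) (b (n + 1)) x y).det := by
      show LinearMap.det ((D'.comp (hD (a (n + 1)) (b (n + 1)) x y)) : ℝ × ℝ →ₗ[ℝ] ℝ × ℝ) = _
      rw [ContinuousLinearMap.toLinearMap_comp, LinearMap.det_comp]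
    obtain ⟨hq1, hq0⟩ := qrec_pos n a (fun i hi hin => ha i hi (hin.trans (Nat.le_succ n)))
    have hq1R : (1 : ℝ) ≤ (qrec a (n + 1) : ℝ) := by exact_mod_cast hq1
    have hq0R : (0 : ℝ) ≤ (qrec a n : ℝ) := by exact_mod_cast hq0
    have hS : (0 : ℝ) < (qrec a (n + 1) : ℝ) + x' * (qrec a n : ℝ) := by
      have := mul_nonneg hx'.1 hq0R; linarith
    have hrec : (qrec a (n + 2) : ℝ)
        = (a (n + 1) : ℝ) * (qrec a (n + 1) : ℝ) + (qrec a n : ℝ) := by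
      push_cast [qrec]; ring
    have hkey : ((qrec a (n + 1) : ℝ) + x' * (qrec a n : ℝ)) * ((a (n + 1) : ℝ) + x)
        = (qrec a (n + 2) : ℝ) + x * (qrec a (n + 1) : ℝ) := by
      rw [hrec, hx'def]
      field_simp
      ring
    rw [hdetcomp, hD_det, abs_mul, hdet']
    rw [abs_neg, abs_inv, abs_pow, abs_of_pos hd]
    rw [div_mul_eq_mul_div, one_mul, ← hkey]
    rw [mul_pow]
    field_simp

/-- composition Jacobian formula:
`|Jac (h_{a_1,b_1} ∘ ⋯ ∘ h_{a_n,b_n})(x,y)| = 1/(q_n + x q_{n-1})³`. -/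
theorem hcomp_jacobian (n : ℕ) (a b : ℕ → ℤ)
    (ha : ∀ i, 1 ≤ i → i ≤ n → 1 ≤ a i)
    (hb : ∀ i, 1 ≤ i → i ≤ n → 0 ≤ b i ∧ b i ≤ a i)
    (x y : ℝ) (hx : x ∈ Set.Icc (0 : ℝ) 1) (hy : y ∈ Set.Icc (0 : ℝ) 1) :
    |(fderiv ℝ (hcomp a b n) (x, y)).det|
      = 1 / ((qrec a (n + 1) : ℝ) + x * (qrec a n : ℝ)) ^ 3 := by
  obtain ⟨D, hD, hdet⟩ := hcomp_key n a b ha x y hx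
  rw [hD.fderiv, hdet]
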